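/- Let p be an odd prime, m = (p-1)/2, and let x ≥ 1 be an integer. Then Σ_{a=m}^{p-1} Σ_{b=m}^{p-1} (-1)^(a+b) · C(a,m)^x · C(b,m)^x · C(a+b, p-1) · C(p-1, a) · C(p-1, b) ≡ C(p-1, m)^2 ≡ 1 (mod p), using that C(p-1, m) ≡ (-1)^m (mod p). -/
import Mathlib

lemma aux_lucas_zero (p : ℕ) [Fact p.Prime] (n : ℕ) (h1 : p - 1 < n) (h2 : n ≤ 2 * (p - 1)) :
    ((n.choose (p - 1) : ZMod p)) = 0 := by
  have hp : p.Prime := Fact.out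
  have hp2 : 2 ≤ p := hp.two_le
  have hpn : p ≤ n := by omega
  have hmod : n % p = n - p := by
    rw [Nat.mod_eq_sub_mod hpn, Nat.mod_eq_of_lt (by omega)]
  have hdiv : n / p = 1 := by
    apply Nat.div_eq_of_lt_le <;> omega
  have hk1 : (p - 1) % p = p - 1 := Nat.mod_eq_of_lt (by omega)
  have hk2 : (p - 1) / p = 0 := Nat.div_eq_of_lt (by omega)
  have h := Choose.choose_modEq_choose_mod_mul_choose_div (p := p) (n := n) (k := p - 1)
  rw [hmod, hdiv, hk1, hk2] at h
  have hz : (n - p).choose (p - 1) = 0 := Nat.choose_eq_zero_of_lt (by omega)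
  have := (ZMod.intCast_eq_intCast_iff _ _ _).mpr h
  push_cast at this
  rw [this, hz]
  simp

lemma aux_neg_one (p : ℕ) [Fact p.Prime] (k : ℕ) (hk : k ≤ p - 1) :
    (((p - 1).choose k : ZMod p)) = (-1) ^ k := by
  have hp : p.Prime := Fact.out
  have hp2 : 2 ≤ p := hp.two_le
  induction k with
  | zero => simp
  | succ k ih =>
    have hk' : k ≤ p - 1 := by omega
    have hpk : (p.choose (k + 1) : ZMod p) = 0 := by
      have : (p : ℕ) ∣ p.choose (k + 1) :=
        hp.dvd_choose_self (by omega) (by omega)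
      exact_mod_cast (ZMod.natCast_eq_zero_iff _ _).mpr this
    have hpascal : p.choose (k + 1) = (p - 1).choose k + (p - 1).choose (k + 1) := by
      have : p = (p - 1) + 1 := by omega
      rw [this]
      exact Nat.choose_succ_succ' (p - 1) k ▸ rfl
    have : ((p - 1).choose k : ZMod p) + ((p - 1).choose (k + 1) : ZMod p) = 0 := by
      rw [← Nat.cast_add, ← hpascal, hpk]
    rw [ih hk'] at this
    have : ((p - 1).choose (k + 1) : ZMod p) = -(-1) ^ k := by linear_combination this
    rw [this, pow_succ]
    ring

theorem stmt_18 (p m x : ℕ) (hp : p.Prime) (hodd : Odd p)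
    (hm : m = (p - 1) / 2) (hx : 1 ≤ x) :
    (∑ a ∈ Finset.Icc m (p - 1), ∑ b ∈ Finset.Icc m (p - 1),
        (-1 : ZMod p) ^ (a + b) * (a.choose m : ZMod p) ^ x * (b.choose m : ZMod p) ^ x *
          ((a + b).choose (p - 1) : ZMod p) *
          ((p - 1).choose a : ZMod p) * ((p - 1).choose b : ZMod p))
      = ((p - 1).choose m : ZMod p) ^ 2 ∧
    ((p - 1).choose m : ZMod p) = (-1) ^ m ∧
    ((p - 1).choose m : ZMod p) ^ 2 = 1 := by
  haveI : Fact p.Prime := ⟨hp⟩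
  have hp2 : 2 ≤ p := hp.two_le
  have hp3 : 3 ≤ p := by
    rcases hodd with ⟨k, hk⟩; omega
  have h2m : 2 * m = p - 1 := by
    rcases hodd with ⟨k, hk⟩; omega
  have hmle : m ≤ p - 1 := by omega
  constructor
  · rw [Finset.sum_eq_single m, Finset.sum_eq_single m]
    · have h1 : (m + m).choose (p - 1) = 1 := by
        have : m + m = p - 1 := by omega
        rw [this, Nat.choose_self]
      rw [h1, Nat.choose_self]
      have : (-1 : ZMod p) ^ (m + m) = 1 := by
        rw [← two_mul, pow_mul]; norm_num
      rw [this]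
      push_cast
      ring
    · intro b hb hbm
      have hb' := Finset.mem_Icc.mp hb
      have : ((m + b).choose (p - 1) : ZMod p) = 0 :=
        aux_lucas_zero p _ (by omega) (by omega)
      rw [this]; ring
    · intro h
      exact absurd (Finset.mem_Icc.mpr ⟨le_refl m, hmle⟩) h
    · intro a ha ham
      have ha' := Finset.mem_Icc.mp ha
      apply Finset.sum_eq_zero
      intro b hb
      have hb' := Finset.mem_Icc.mp hb
      have : ((a + b).choose (p - 1) : ZMod p) = 0 :=
        aux_lucas_zero p _ (by omega) (by omega)
      rw [this]; ring
    · intro h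
      exact absurd (Finset.mem_Icc.mpr ⟨le_refl m, hmle⟩) h
  refine ⟨aux_neg_one p m hmle, ?_⟩
  rw [aux_neg_one p m hmle, ← pow_mul, mul_comm, pow_mul]
  norm_num
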